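/- arXiv:2308.04407 — 3 statements merged into one kernel-verified Lean document; each statement's English description precedes it below -/
import Mathlib

section
/- For every finite graph G with n vertices and minimum degree δ, there exists a dominating set of size at most n(1 + ln(1+δ))/(1+δ). -/
open Real

section AuxDominating
open Finset
open Real

lemma aux_log {x : ℝ} (hx : 0 < x) : 1 - 1/x ≤ Real.log x := by
  have h := Real.log_le_sub_one_of_pos (show (0:ℝ) < 1/x by positivity)
  rw [Real.log_div one_ne_zero hx.ne', Real.log_one] at h
  linarith

lemma key_step (c u u' : ℝ) (hc : 1 ≤ c) (hu : c < u) (hu'0 : 0 ≤ u')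
    (hu' : u' ≤ (1 - 1/c) * u) :
    1 + (if u' ≤ c then u' else c * (Real.log (u' / c) + 1)) ≤
      c * (Real.log (u / c) + 1) := by
  have hc0 : 0 < c := by linarith
  have hu0 : 0 < u := by linarith
  have hs1 : 1 < u / c := (one_lt_div hc0).2 hu
  have hls : 1 - c/u ≤ Real.log (u/c) := by
    have := aux_log (show (0:ℝ) < u/c by linarith)
    rwa [one_div_div] at this
  have hcc : c * (1/c) = 1 := by field_simp
  by_cases h : u' ≤ c
  · rw [if_pos h]
    by_cases h2 : (1 - 1/c) * u ≤ c
    · set s := u / c with hsdef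
      have hss : 0 < s := by rw [hsdef]; positivity
      have hcs0 : c * s = u := by rw [hsdef, mul_comm, div_mul_cancel₀ _ hc0.ne']
      have e : (1 - 1/c) * u = (c - 1) * s := by
        rw [← hcs0]; field_simp
      have hA : u' ≤ (c - 1) * s := by rw [← e]; exact hu'
      have hB : (c - 1) * s ≤ c := by rw [← e]; exact h2
      have ecu : c / u = 1 / s := by
        rw [← hcs0, div_eq_div_iff (by positivity) hss.ne.symm]; ring
      have hsl : s - 1 ≤ s * Real.log s := by
        have h1 : 1 - 1/s ≤ Real.log s := by rw [← ecu]; exact hls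
        have h2' := mul_le_mul_of_nonneg_left h1 hss.le
        have : s * (1 - 1/s) = s - 1 := by field_simp
        linarith [this ▸ h2']
      -- goal: 1 + u' ≤ c * (Real.log s + 1)
      nlinarith [mul_le_mul_of_nonneg_right hB (sub_nonneg.2 hs1.le),
        mul_le_mul_of_nonneg_left hsl hc0.le, hss, hA, hs1]
    · push_neg at h2
      have h3 : c / u < 1 - 1/c := by
        rw [div_lt_iff₀ hu0]; nlinarith
      have h4 : 1/c < Real.log (u/c) := by linarith
      have h5 : c * (1/c) < c * Real.log (u/c) := mul_lt_mul_of_pos_left h4 hc0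
      linarith
  · rw [if_neg h]
    push_neg at h
    have hc1 : 1 < c := by
      by_contra hcc'
      push_neg at hcc'
      have hce : c = 1 := le_antisymm hcc' hc
      rw [hce] at hu'
      simp at hu'
      linarith
    have hu'0' : 0 < u' := by linarith
    have h1c : 0 < 1 - 1/c := by
      rw [sub_pos, div_lt_one hc0]; exact hc1
    have hlog : Real.log u' ≤ Real.log (1 - 1/c) + Real.log u := by
      calc Real.log u' ≤ Real.log ((1 - 1/c) * u) :=
            Real.log_le_log hu'0' hu'
        _ = Real.log (1 - 1/c) + Real.log u := Real.log_mul h1c.ne' hu0.ne'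
    have hl2 : Real.log (1 - 1/c) ≤ -(1/c) := by
      have := Real.log_le_sub_one_of_pos h1c
      linarith
    have e1 : Real.log (u/c) = Real.log u - Real.log c := Real.log_div hu0.ne' hc0.ne'
    have e2 : Real.log (u'/c) = Real.log u' - Real.log c := Real.log_div hu'0'.ne' hc0.ne'
    have hfin : Real.log (u'/c) + 1/c ≤ Real.log (u/c) := by
      rw [e1, e2]; linarith
    have := mul_le_mul_of_nonneg_left hfin hc0.le
    nlinarith
open Finset

lemma exists_good_vertex {V : Type*} [Fintype V] [DecidableEq V]
    (G : SimpleGraph V) [DecidableRel G.Adj] (U : Finset V) (hU : U.Nonempty) :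
    ∃ v : V, U.card * (G.minDegree + 1) ≤
      Fintype.card V * (U ∩ insert v (G.neighborFinset v)).card := by
  classical
  set N : V → Finset V := fun v => insert v (G.neighborFinset v) with hN
  have hsym : ∀ u v : V, u ∈ N v ↔ v ∈ N u := by
    intro u v
    simp only [hN, mem_insert, SimpleGraph.mem_neighborFinset]
    constructor <;> (rintro (h | h); exacts [Or.inl h.symm, Or.inr h.symm])
  have hNcard : ∀ u : V, G.minDegree + 1 ≤ (N u).card := by
    intro u
    have : (N u).card = G.degree u + 1 := by
      rw [hN]
      rw [card_insert_of_notMem (by simp [SimpleGraph.mem_neighborFinset])]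
      simp [SimpleGraph.card_neighborFinset_eq_degree]
    rw [this]
    exact Nat.add_le_add_right (G.minDegree_le_degree u) 1
  have hfe : ∀ u : V, univ.filter (fun v => u ∈ N v) = N u := by
    intro u; ext v
    simp only [mem_filter, mem_univ, true_and]
    exact hsym u v
  have hsum : U.card * (G.minDegree + 1) ≤ ∑ v : V, (U ∩ N v).card := by
    have e1 : ∀ v : V, (U ∩ N v).card = ∑ u ∈ U, if u ∈ N v then 1 else 0 := by
      intro v
      rw [show U ∩ N v = U.filter (· ∈ N v) from (Finset.filter_mem_eq_inter).symm]
      exact Finset.card_filter _ _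
    calc U.card * (G.minDegree + 1) = ∑ _u ∈ U, (G.minDegree + 1) := by
          rw [Finset.sum_const, smul_eq_mul]
      _ ≤ ∑ u ∈ U, (N u).card := Finset.sum_le_sum fun u _ => hNcard u
      _ = ∑ u ∈ U, ∑ v : V, (if u ∈ N v then 1 else 0) := by
          apply Finset.sum_congr rfl
          intro u _
          rw [← hfe u]
          exact Finset.card_filter _ _
      _ = ∑ v : V, ∑ u ∈ U, (if u ∈ N v then 1 else 0) := Finset.sum_comm
      _ = ∑ v : V, (U ∩ N v).card := by
          apply Finset.sum_congr rfl; intro v _; rw [← e1 v]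
  by_contra hcon
  push_neg at hcon
  have : Nonempty V := ⟨hU.choose⟩
  have hlt : ∑ v : V, Fintype.card V * (U ∩ N v).card <
      ∑ _v : V, U.card * (G.minDegree + 1) := by
    apply Finset.sum_lt_sum_of_nonempty univ_nonempty
    intro v _
    exact hcon v
  rw [Finset.sum_const, Finset.card_univ, smul_eq_mul, ← Finset.mul_sum] at hlt
  have := Nat.mul_le_mul_left (Fintype.card V) hsum
  omega
open Finset Real

lemma greedy_main {V : Type*} [Fintype V] [DecidableEq V]
    (G : SimpleGraph V) [DecidableRel G.Adj] (hV : 0 < Fintype.card V)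
    (hc : (1:ℝ) ≤ (Fintype.card V : ℝ) / (G.minDegree + 1)) :
    ∀ (k : ℕ) (U : Finset V), U.card ≤ k →
      ∃ D : Finset V, (∀ v ∈ U, v ∈ D ∨ ∃ u ∈ D, G.Adj u v) ∧
        (D.card : ℝ) ≤ (if (U.card : ℝ) ≤ (Fintype.card V : ℝ) / (G.minDegree + 1)
          then (U.card : ℝ)
          else ((Fintype.card V : ℝ) / (G.minDegree + 1)) *
            (Real.log ((U.card : ℝ) / ((Fintype.card V : ℝ) / (G.minDegree + 1))) + 1)) := by
  set n : ℝ := (Fintype.card V : ℝ) with hn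
  set c : ℝ := n / (G.minDegree + 1) with hcdef
  intro k
  induction k with
  | zero =>
    intro U hU
    refine ⟨∅, ?_, ?_⟩
    · intro v hv
      rw [Nat.le_zero, Finset.card_eq_zero] at hU
      simp [hU] at hv
    · rw [Nat.le_zero, Finset.card_eq_zero] at hU
      subst hU
      simp only [Finset.card_empty, Nat.cast_zero]
      rw [if_pos (by linarith)]
  | succ k ih =>
    intro U hU
    by_cases h : (U.card : ℝ) ≤ c
    · exact ⟨U, fun v hv => Or.inl hv, by rw [if_pos h]⟩
    · push_neg at h
      have hUne : U.Nonempty := by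
        rw [← Finset.card_pos]
        by_contra hc'
        push_neg at hc'
        interval_cases hcard : U.card
        · simp at h; linarith
      obtain ⟨v, hv⟩ := exists_good_vertex G U hUne
      set Nv := insert v (G.neighborFinset v) with hNv
      set m := (U ∩ Nv).card with hm
      have hm1 : 1 ≤ m := by
        rcases Nat.eq_zero_or_pos m with h0 | h1
        · exfalso
          rw [h0, Nat.mul_zero] at hv
          have : 0 < U.card * (G.minDegree + 1) :=
            Nat.mul_pos (Finset.card_pos.2 hUne) (Nat.succ_pos _)
          omega
        · exact h1
      set U' := U \ Nv with hU'
      have hcard' : U'.card + m = U.card := by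
        rw [hU', hm]
        rw [add_comm]
        exact Finset.card_inter_add_card_sdiff U Nv
      have hU'le : U'.card ≤ k := by omega
      obtain ⟨D', hD'dom, hD'card⟩ := ih U' hU'le
      refine ⟨insert v D', ?_, ?_⟩
      · intro w hw
        by_cases hwN : w ∈ Nv
        · rw [hNv, Finset.mem_insert] at hwN
          rcases hwN with rfl | hadj
          · exact Or.inl (Finset.mem_insert_self _ _)
          · rw [SimpleGraph.mem_neighborFinset] at hadj
            exact Or.inr ⟨v, Finset.mem_insert_self _ _, hadj⟩
        · rcases hD'dom w (Finset.mem_sdiff.2 ⟨hw, hwN⟩) with h1 | ⟨u, hu, hadj⟩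
          · exact Or.inl (Finset.mem_insert_of_mem h1)
          · exact Or.inr ⟨u, Finset.mem_insert_of_mem hu, hadj⟩
      · have hstep : (U'.card : ℝ) ≤ (1 - 1/c) * U.card := by
          have hmc : (U.card : ℝ) * ((G.minDegree : ℝ) + 1) ≤ n * m := by
            rw [hn]; exact_mod_cast hv
          have hd1 : (0:ℝ) < (G.minDegree : ℝ) + 1 := by positivity
          have hn0 : (0:ℝ) < n := by rw [hn]; exact_mod_cast hV
          have h1c : 1/c = ((G.minDegree : ℝ) + 1) / n := by
            rw [hcdef, one_div_div]
          have hmge : (U.card : ℝ) / c ≤ (m : ℝ) := by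
            rw [hcdef, div_div_eq_mul_div, div_le_iff₀ hn0]
            linarith [hmc, mul_comm n (m:ℝ)]
          have : (U'.card : ℝ) = (U.card : ℝ) - m := by
            have := hcard'
            push_cast [← this]
            ring
          rw [this]
          have : (1 - 1/c) * U.card = (U.card : ℝ) - U.card / c := by
            ring
          rw [this]
          linarith
        have hDins : ((insert v D').card : ℝ) ≤ (D'.card : ℝ) + 1 := by
          exact_mod_cast Finset.card_insert_le v D'
        rw [if_neg (not_le.2 h)]
        calc ((insert v D').card : ℝ) ≤ (D'.card : ℝ) + 1 := hDins
          _ ≤ 1 + (if (U'.card : ℝ) ≤ c then (U'.card : ℝ)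
              else c * (Real.log ((U'.card : ℝ) / c) + 1)) := by linarith [hD'card]
          _ ≤ c * (Real.log ((U.card : ℝ) / c) + 1) :=
              key_step c _ _ hc h (by positivity) hstep

end AuxDominating

/-- For every finite graph `G` with `n` vertices and minimum degree `δ`, there exists a
dominating set of size at most `n (1 + ln (1+δ)) / (1+δ)`. -/
theorem exists_dominating_set_le (V : Type*) [Fintype V] [DecidableEq V]
    (G : SimpleGraph V) [DecidableRel G.Adj] :
    ∃ D : Finset V, (∀ v : V, v ∈ D ∨ ∃ u ∈ D, G.Adj u v) ∧
      (D.card : ℝ) ≤ (Fintype.card V : ℝ) * (1 + Real.log (1 + (G.minDegree : ℝ))) /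
        (1 + (G.minDegree : ℝ)) := by
  classical
  rcases Nat.eq_zero_or_pos (Fintype.card V) with h0 | hV
  · have : IsEmpty V := Fintype.card_eq_zero_iff.mp h0
    refine ⟨∅, fun v => (this.false v).elim, ?_⟩
    rw [h0]
    simp
  · set n : ℝ := (Fintype.card V : ℝ) with hn
    set d : ℝ := (G.minDegree : ℝ) with hd
    have hdlt : G.minDegree + 1 ≤ Fintype.card V := by
      obtain ⟨v⟩ := Fintype.card_pos_iff.mp hV
      have h1 := G.minDegree_le_degree v
      have h2 := G.degree_lt_card_verts v
      omega
    have hd1 : (0:ℝ) < d + 1 := by rw [hd]; positivity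
    have hn0 : (0:ℝ) < n := by rw [hn]; exact_mod_cast hV
    have hdn : d + 1 ≤ n := by rw [hd, hn]; exact_mod_cast hdlt
    have hc : (1:ℝ) ≤ n / (d + 1) := by
      rw [le_div_iff₀ hd1, one_mul]; exact hdn
    obtain ⟨D, hdom, hcard⟩ := greedy_main G hV hc (Fintype.card V) Finset.univ
      (le_of_eq (Finset.card_univ))
    refine ⟨D, fun v => hdom v (Finset.mem_univ v), ?_⟩
    rw [Finset.card_univ] at hcard
    rw [add_comm (1:ℝ) d]
    rcases Nat.eq_zero_or_pos G.minDegree with hdz | hdp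
    · have hdz' : d = 0 := by rw [hd, hdz]; simp
      rw [if_pos (by rw [hdz]; simp)] at hcard
      rw [hdz']
      simp only [zero_add, Real.log_one, add_zero, div_one, mul_one]
      exact hcard
    · have hd1' : (1:ℝ) < d + 1 := by
        rw [hd]
        have : (1:ℝ) ≤ (G.minDegree : ℝ) := by exact_mod_cast hdp
        linarith
      have hlt : n / (d + 1) < n := div_lt_self hn0 hd1'
      rw [if_neg (by push_cast; linarith)] at hcard
      have hnc : n / (n / (d + 1)) = d + 1 := by
        rw [div_div_eq_mul_div, mul_comm, mul_div_assoc, div_self hn0.ne', mul_one]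
      rw [hnc] at hcard
      calc (D.card : ℝ) ≤ n / (d + 1) * (Real.log (d + 1) + 1) := hcard
        _ = n * (1 + Real.log (d + 1)) / (d + 1) := by ring
end

section
/- For all real δ' ≥ 1, if w = (1+δ')/(1+ln(1+δ')), then (e·w)^{1/w} ≤ e. -/
open Real

/-- For all real `δ' ≥ 1`, if `w = (1+δ')/(1+ln(1+δ'))`, then `(e·w)^(1/w) ≤ e`. -/
theorem ew_rpow_inv_w_le_e (δ' : ℝ) (hδ : 1 ≤ δ') :
    (Real.exp 1 * ((1 + δ') / (1 + Real.log (1 + δ')))) ^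
        (((1 + δ') / (1 + Real.log (1 + δ')))⁻¹) ≤ Real.exp 1 := by
  set w : ℝ := (1 + δ') / (1 + Real.log (1 + δ')) with hwdef
  have hx : (2:ℝ) ≤ 1 + δ' := by linarith
  have hL : 0 ≤ Real.log (1 + δ') := Real.log_nonneg (by linarith)
  have hw : 0 < w := div_pos (by linarith) (by linarith)
  have hew : 0 < Real.exp 1 * w := mul_pos (Real.exp_pos 1) hw
  rw [← Real.exp_log hew, ← Real.exp_mul, Real.exp_le_exp]
  have hlog : Real.log (Real.exp 1 * w) ≤ w := by
    rw [Real.log_mul (Real.exp_ne_zero 1) (ne_of_gt hw), Real.log_exp]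
    have := Real.log_le_sub_one_of_pos hw
    linarith
  calc Real.log (Real.exp 1 * w) * w⁻¹ ≤ w * w⁻¹ :=
        mul_le_mul_of_nonneg_right hlog (le_of_lt (inv_pos.mpr hw))
    _ = 1 := mul_inv_cancel₀ (ne_of_gt hw)
end

section
/- Let G be a graph on n' vertices with minimum degree δ' ≥ 1. After selecting ⌈n' ln(δ'+1)/(δ'+1)⌉ vertices greedily (each covering the maximum number of undominated vertices), the number of undominated vertices is less than n'/(1+δ'); hence the greedy heuristic returns a dominating set of size at most n'(1 + ln(1+δ'))/(1+δ'). -/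
open Finset Real

/-- The set of vertices not dominated (via closed neighbourhoods) by the set `S`. -/
def undominated {V : Type*} [Fintype V] [DecidableEq V]
    (G : SimpleGraph V) [DecidableRel G.Adj] (S : Finset V) : Finset V :=
  Finset.univ.filter (fun v => ∀ s ∈ S, ¬(v = s ∨ G.Adj s v))

private lemma undominated_insert {V : Type*} [Fintype V] [DecidableEq V]
    (G : SimpleGraph V) [DecidableRel G.Adj] (S : Finset V) (v : V) :
    undominated G (insert v S) =
      (undominated G S).filter (fun u => ¬(u = v ∨ G.Adj v u)) := by
  ext u
  simp only [undominated, Finset.mem_filter, Finset.mem_univ, true_and,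
    Finset.forall_mem_insert]
  tauto

private lemma key_real {n d : ℝ} (hd : 1 ≤ d) (hdn : d + 1 ≤ n) :
    n * (1 - (d + 1) / n) ^ (⌈n * Real.log (d + 1) / (d + 1)⌉₊ : ℕ) < n / (d + 1) ∧
      ((⌈n * Real.log (d + 1) / (d + 1)⌉₊ : ℝ)) +
          n * (1 - (d + 1) / n) ^ (⌈n * Real.log (d + 1) / (d + 1)⌉₊ : ℕ) ≤
        n * Real.log (d + 1) / (d + 1) + n / (d + 1) := by
  have hn : (0 : ℝ) < n := by linarith
  have hd1 : (0 : ℝ) < d + 1 := by linarith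
  set x : ℝ := n * Real.log (d + 1) / (d + 1) with hxdef
  set T : ℕ := ⌈x⌉₊ with hTdef
  set a : ℝ := (d + 1) / n with hadef
  set b : ℝ := 1 - a with hbdef
  have ha0 : 0 < a := div_pos hd1 hn
  have ha1 : a ≤ 1 := by
    rw [hadef, div_le_one hn]; linarith
  have hb0 : 0 ≤ b := by simp [hbdef]; linarith
  have hb1 : b < 1 := by simp [hbdef]; linarith
  have hlog : 0 < Real.log (d + 1) := Real.log_pos (by linarith)
  have hx0 : 0 < x := div_pos (mul_pos hn hlog) hd1
  have hna : n * a = d + 1 := by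
    rw [hadef]; field_simp
  have hxa : x * a = Real.log (d + 1) := by
    rw [hxdef, hadef]; field_simp
  have hT_ge : x ≤ (T : ℝ) := Nat.le_ceil x
  have hT_lt : (T : ℝ) < x + 1 := Nat.ceil_lt_add_one hx0.le
  have hT1 : 1 ≤ T := by
    rw [hTdef]; exact Nat.one_le_ceil_iff.mpr hx0
  set s : ℝ := (T : ℝ) - x with hsdef
  have hs0 : 0 ≤ s := by simp [hsdef]; linarith
  have hs1 : s ≤ 1 := by simp [hsdef]; linarith
  have hNd : 1 ≤ n / (d + 1) := by
    rw [le_div_iff₀ hd1]; linarith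
  rcases eq_or_lt_of_le hb0 with hb | hbpos
  · -- b = 0
    have hbT : b ^ (T : ℕ) = 0 := by
      rw [← hb]; exact zero_pow (by omega)
    constructor
    · rw [hbT]; simpa using div_pos hn hd1
    · rw [hbT]; simpa using by linarith
  · -- 0 < b
    have hbx : b ^ (x : ℝ) < (d + 1)⁻¹ := by
      rw [Real.rpow_def_of_pos hbpos, mul_comm]
      have hlb : Real.log b < -a := by
        have := Real.log_lt_sub_one_of_pos hbpos (by linarith)
        rw [hbdef] at this ⊢; linarith
      have h2 : x * Real.log b < x * (-a) :=
        mul_lt_mul_of_pos_left hlb hx0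
      have h3 : x * (-a) = -Real.log (d + 1) := by rw [← hxa]; ring
      calc Real.exp (x * Real.log b) < Real.exp (-Real.log (d + 1)) := by
            exact Real.exp_lt_exp.mpr (by linarith)
        _ = (d + 1)⁻¹ := by rw [Real.exp_neg, Real.exp_log hd1]
    have hbs : b ^ (s : ℝ) ≤ 1 - s * a := by
      have := Real.geom_mean_le_arith_mean2_weighted (w₁ := 1 - s) (w₂ := s)
        (p₁ := 1) (p₂ := b) (by linarith) hs0 zero_le_one hb0 (by ring)
      rw [Real.one_rpow, one_mul] at this
      calc b ^ (s : ℝ) ≤ (1 - s) * 1 + s * b := this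
        _ = 1 - s * a := by rw [hbdef]; ring
    have halt : a < 1 := by rw [hbdef] at hbpos; linarith
    have hsa1 : 0 < 1 - s * a := by nlinarith
    have hkey : n * b ^ (T : ℕ) < n / (d + 1) - s := by
      have hsplit : b ^ (T : ℕ) = b ^ (x : ℝ) * b ^ (s : ℝ) := by
        rw [← Real.rpow_natCast b T, show ((T : ℕ) : ℝ) = x + s by rw [hsdef]; ring,
          Real.rpow_add hbpos]
      have hbs0 : 0 ≤ b ^ (s : ℝ) := Real.rpow_nonneg hb0 s
      have h4 : b ^ (x : ℝ) * b ^ (s : ℝ) < (d + 1)⁻¹ * (1 - s * a) := by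
        have hbx0 : 0 ≤ b ^ (x : ℝ) := Real.rpow_nonneg hb0 x
        calc b ^ (x : ℝ) * b ^ (s : ℝ) ≤ b ^ (x : ℝ) * (1 - s * a) :=
              mul_le_mul_of_nonneg_left hbs hbx0
          _ < (d + 1)⁻¹ * (1 - s * a) := mul_lt_mul_of_pos_right hbx hsa1
      have h5 : n * ((d + 1)⁻¹ * (1 - s * a)) = n / (d + 1) - s := by
        have : n * ((d + 1)⁻¹ * (s * a)) = s := by
          rw [show n * ((d + 1)⁻¹ * (s * a)) = s * (n * a) * (d + 1)⁻¹ by ring, hna]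
          field_simp
        rw [show n * ((d+1)⁻¹ * (1 - s*a)) = n * (d+1)⁻¹ - n * ((d+1)⁻¹ * (s*a)) by ring,
          this, div_eq_mul_inv]
      rw [hsplit, ← h5]
      exact mul_lt_mul_of_pos_left h4 hn
    constructor
    · linarith
    · have : (T : ℝ) = x + s := by rw [hsdef]; ring
      linarith

/-- Greedy dominating-set bound: running the greedy process (each step adds a vertex whose closed
neighbourhood covers the most currently undominated vertices) for
`⌈n' ln(δ'+1)/(δ'+1)⌉` steps leaves fewer than `n'/(1+δ')` undominated vertices; hence the
greedy heuristic returns a dominating set of size at most `n'(1 + ln(1+δ'))/(1+δ')`. -/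
theorem greedy_dominating_set_bound (V : Type*) [Fintype V] [DecidableEq V]
    (G : SimpleGraph V) [DecidableRel G.Adj] (hδ : 1 ≤ G.minDegree)
    (f : ℕ → Finset V) (h0 : f 0 = ∅)
    (hgreedy : ∀ t, ∃ v : V, f (t + 1) = insert v (f t) ∧
      ∀ w : V, ((undominated G (f t)).filter (fun u => u = w ∨ G.Adj w u)).card ≤
        ((undominated G (f t)).filter (fun u => u = v ∨ G.Adj v u)).card) :
    (((undominated G
          (f ⌈(Fintype.card V : ℝ) * Real.log ((G.minDegree : ℝ) + 1) /
              ((G.minDegree : ℝ) + 1)⌉₊)).card : ℝ) <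
        (Fintype.card V : ℝ) / (1 + (G.minDegree : ℝ))) ∧
      (∀ v : V, v ∈ (f ⌈(Fintype.card V : ℝ) * Real.log ((G.minDegree : ℝ) + 1) /
              ((G.minDegree : ℝ) + 1)⌉₊ ∪
            undominated G (f ⌈(Fintype.card V : ℝ) * Real.log ((G.minDegree : ℝ) + 1) /
              ((G.minDegree : ℝ) + 1)⌉₊)) ∨
        ∃ u ∈ (f ⌈(Fintype.card V : ℝ) * Real.log ((G.minDegree : ℝ) + 1) /
              ((G.minDegree : ℝ) + 1)⌉₊ ∪
            undominated G (f ⌈(Fintype.card V : ℝ) * Real.log ((G.minDegree : ℝ) + 1) /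
              ((G.minDegree : ℝ) + 1)⌉₊)), G.Adj u v) ∧
      (((f ⌈(Fintype.card V : ℝ) * Real.log ((G.minDegree : ℝ) + 1) /
              ((G.minDegree : ℝ) + 1)⌉₊ ∪
            undominated G (f ⌈(Fintype.card V : ℝ) * Real.log ((G.minDegree : ℝ) + 1) /
              ((G.minDegree : ℝ) + 1)⌉₊)).card : ℝ) ≤
        (Fintype.card V : ℝ) * (1 + Real.log (1 + (G.minDegree : ℝ))) /
          (1 + (G.minDegree : ℝ))) := by
  set n : ℕ := Fintype.card V with hndef
  set δ : ℕ := G.minDegree with hδdef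
  -- nonemptiness and basic bounds
  have hnV : Nonempty V := by
    by_contra h
    rw [not_nonempty_iff] at h
    have : G.minDegree = 0 := by
      simp [SimpleGraph.minDegree, Finset.univ_eq_empty]
    omega
  have hδn : δ + 1 ≤ n := by
    obtain ⟨v⟩ := hnV
    have h1 := G.minDegree_le_degree v
    have h2 := G.degree_lt_card_verts v
    omega
  have hn0 : 0 < n := by omega
  have hnR : (0 : ℝ) < n := by exact_mod_cast hn0
  have hd1R : (0 : ℝ) < (δ : ℝ) + 1 := by positivity
  -- the key per-step inequality
  have hstep : ∀ t, n * (undominated G (f (t + 1))).card + (δ + 1) * (undominated G (f t)).card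
      ≤ n * (undominated G (f t)).card := by
    intro t
    obtain ⟨v, hv, hmax⟩ := hgreedy t
    set U := undominated G (f t) with hUdef
    have hsplit : (U.filter (fun u => u = v ∨ G.Adj v u)).card
        + (undominated G (f (t + 1))).card = U.card := by
      rw [hv, undominated_insert]
      exact Finset.card_filter_add_card_filter_not _
    have hcount : (δ + 1) * U.card ≤ n * (U.filter (fun u => u = v ∨ G.Adj v u)).card := by
      have h1 : ∀ u ∈ U, δ + 1 ≤ (Finset.univ.filter (fun w => u = w ∨ G.Adj w u)).card := by
        intro u _
        have hset : Finset.univ.filter (fun w => u = w ∨ G.Adj w u)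
            = insert u (G.neighborFinset u) := by
          ext w
          simp only [Finset.mem_filter, Finset.mem_univ, true_and, Finset.mem_insert,
            SimpleGraph.mem_neighborFinset]
          constructor
          · rintro (h | h)
            · exact Or.inl h.symm
            · exact Or.inr (G.adj_symm h)
          · rintro (h | h)
            · exact Or.inl h.symm
            · exact Or.inr (G.adj_symm h)
        rw [hset, Finset.card_insert_of_notMem (by simp),
          SimpleGraph.card_neighborFinset_eq_degree]
        have := G.minDegree_le_degree u
        omega
      calc (δ + 1) * U.card = ∑ _u ∈ U, (δ + 1) := by
            rw [Finset.sum_const, smul_eq_mul, mul_comm]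
        _ ≤ ∑ u ∈ U, (Finset.univ.filter (fun w => u = w ∨ G.Adj w u)).card :=
            Finset.sum_le_sum h1
        _ = ∑ w ∈ Finset.univ, (U.filter (fun u => u = w ∨ G.Adj w u)).card := by
            simp_rw [Finset.card_filter]
            rw [Finset.sum_comm]
        _ ≤ n * (U.filter (fun u => u = v ∨ G.Adj v u)).card := by
            have := Finset.sum_le_card_nsmul Finset.univ
              (fun w => (U.filter (fun u => u = w ∨ G.Adj w u)).card)
              ((U.filter (fun u => u = v ∨ G.Adj v u)).card)
              (fun w _ => hmax w)
            rw [Finset.card_univ, ← hndef, smul_eq_mul] at this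
            exact this
    calc n * (undominated G (f (t + 1))).card + (δ + 1) * U.card
        ≤ n * (undominated G (f (t + 1))).card
          + n * (U.filter (fun u => u = v ∨ G.Adj v u)).card := by
          exact Nat.add_le_add_left hcount _
      _ = n * ((U.filter (fun u => u = v ∨ G.Adj v u)).card
          + (undominated G (f (t + 1))).card) := by ring
      _ = n * U.card := by rw [hsplit]
  -- geometric decay
  set b : ℝ := 1 - ((δ : ℝ) + 1) / n with hbdef
  have hb0 : 0 ≤ b := by
    rw [hbdef, sub_nonneg, div_le_one hnR]
    exact_mod_cast hδn
  have hdecay : ∀ t, ((undominated G (f t)).card : ℝ) ≤ n * b ^ t := by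
    intro t
    induction t with
    | zero =>
      simpa using (show ((undominated G (f 0)).card : ℝ) ≤ n by
        exact_mod_cast Finset.card_le_univ _)
    | succ t ih =>
      have h1 : (n : ℝ) * (undominated G (f (t + 1))).card
          + ((δ : ℝ) + 1) * (undominated G (f t)).card
          ≤ n * (undominated G (f t)).card := by exact_mod_cast hstep t
      have hnb : (n : ℝ) * b = n - ((δ : ℝ) + 1) := by
        rw [hbdef]; field_simp
      have h2 : (n : ℝ) * (undominated G (f (t + 1))).card
          ≤ n * (b * (undominated G (f t)).card) := by nlinarith [hnb]
      have h3 : ((undominated G (f (t + 1))).card : ℝ) ≤ b * (undominated G (f t)).card :=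
        le_of_mul_le_mul_left h2 hnR
      have h4 : b * ((undominated G (f t)).card : ℝ) ≤ b * (n * b ^ t) :=
        mul_le_mul_of_nonneg_left ih hb0
      calc ((undominated G (f (t + 1))).card : ℝ) ≤ b * (n * b ^ t) := le_trans h3 h4
        _ = n * b ^ (t + 1) := by ring
  -- size of f
  have hfcard : ∀ t, (f t).card ≤ t := by
    intro t
    induction t with
    | zero => simp [h0]
    | succ t ih =>
      obtain ⟨v, hv, -⟩ := hgreedy t
      rw [hv]
      exact le_trans (Finset.card_insert_le _ _) (by omega)
  -- the key real estimate
  have hkey := key_real (n := (n : ℝ)) (d := (δ : ℝ))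
    (by exact_mod_cast hδ) (by exact_mod_cast hδn)
  set x : ℝ := (n : ℝ) * Real.log ((δ : ℝ) + 1) / ((δ : ℝ) + 1) with hxdef
  set T : ℕ := ⌈x⌉₊ with hTdef
  obtain ⟨hkey1, hkey2⟩ := hkey
  have hmT : ((undominated G (f T)).card : ℝ) ≤ (n : ℝ) * b ^ T := hdecay T
  have hcomm : (1 : ℝ) + (δ : ℝ) = (δ : ℝ) + 1 := by ring
  refine ⟨?_, ?_, ?_⟩
  · -- part 1
    rw [show (n : ℝ) / (1 + (δ : ℝ)) = (n : ℝ) / ((δ : ℝ) + 1) by rw [hcomm]]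
    exact lt_of_le_of_lt hmT hkey1
  · -- part 2: domination
    intro v
    by_cases hvU : v ∈ undominated G (f T)
    · exact Or.inl (Finset.mem_union_right _ hvU)
    · have : ¬ (∀ s ∈ f T, ¬(v = s ∨ G.Adj s v)) := by
        intro h
        apply hvU
        simp only [undominated, Finset.mem_filter, Finset.mem_univ, true_and]
        intro s hs
        have := h s hs
        tauto
      push_neg at this
      obtain ⟨s, hs, hvs⟩ := this
      rcases hvs with h | h
      · exact Or.inl (Finset.mem_union_left _ (h ▸ hs))
      · exact Or.inr ⟨s, Finset.mem_union_left _ hs, h⟩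
  · -- part 3: size bound
    have hcard : ((f T ∪ undominated G (f T)).card : ℝ)
        ≤ (T : ℝ) + ((undominated G (f T)).card : ℝ) := by
      have h1 : (f T ∪ undominated G (f T)).card
          ≤ (f T).card + (undominated G (f T)).card := Finset.card_union_le _ _
      have h2 := hfcard T
      exact_mod_cast le_trans h1 (by omega)
    have hrhs : (n : ℝ) * (1 + Real.log (1 + (δ : ℝ))) / (1 + (δ : ℝ))
        = x + (n : ℝ) / ((δ : ℝ) + 1) := by
      rw [hcomm, hxdef]
      field_simp
      ring
    rw [hrhs]
    calc ((f T ∪ undominated G (f T)).card : ℝ)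
        ≤ (T : ℝ) + ((undominated G (f T)).card : ℝ) := hcard
      _ ≤ (T : ℝ) + (n : ℝ) * b ^ T := by linarith
      _ ≤ x + (n : ℝ) / ((δ : ℝ) + 1) := hkey2
end
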